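/- Let (a,b) ∈ {(2,0), (2,2)} ⊆ (ℤ/4ℤ)², i.e., θ = a + bw ∈ {2, 2+2w}, and R = R_θ. Then (2) = (2+2w) and (w) = (3w) = (2+w) = (2+3w) as ideals of R, and R has exactly five ideals, which form the chain (0) ⊊ (2w) ⊊ (2) ⊊ (w) ⊊ R. -/

import Mathlib

open Polynomial

/-- The base ring ℤ/4ℤ. -/
abbrev Z4 := ZMod 4

/-- The polynomial X² − (a + bX) over ℤ/4ℤ. -/
noncomputable def wPoly (a b : Z4) : Z4[X] := X ^ 2 - (C b * X + C a)

/-- The ring R_{a+bw} = (ℤ/4ℤ)[X]/(X² − (a + bX)); every element is uniquely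
x₀ + x₁·w with x₀, x₁ ∈ ℤ/4ℤ, and w² = a + b·w. -/
abbrev Rw (a b : Z4) : Type := AdjoinRoot (wPoly a b)

/-- The element w of R_{a+bw}. -/
noncomputable def ww (a b : Z4) : Rw a b := AdjoinRoot.root _


instance : Nontrivial Z4 := ⟨0, 1, by decide⟩

lemma wPoly_monic (a b : Z4) : (wPoly a b).Monic := by
  unfold wPoly
  exact monic_X_pow_sub (lt_of_le_of_lt degree_linear_le (by decide))

lemma wPoly_degree (a b : Z4) : (wPoly a b).degree = 2 := by
  unfold wPoly
  rw [degree_sub_eq_left_of_degree_lt, degree_X_pow]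
  · rfl
  · rw [degree_X_pow]
    exact lt_of_le_of_lt degree_linear_le (by decide)

lemma exists_repr (a b : Z4) (z : Rw a b) :
    ∃ c0 c1 : Z4, z = AdjoinRoot.of (wPoly a b) c0 + AdjoinRoot.of (wPoly a b) c1 * ww a b := by
  obtain ⟨f, rfl⟩ := AdjoinRoot.mk_surjective z
  set c0 := (f %ₘ wPoly a b).coeff 0 with hc0
  set c1 := (f %ₘ wPoly a b).coeff 1 with hc1
  refine ⟨c0, c1, ?_⟩
  have h1 : AdjoinRoot.mk (wPoly a b) f = AdjoinRoot.mk (wPoly a b) (f %ₘ wPoly a b) := by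
    conv_lhs => rw [← modByMonic_add_div f (wPoly a b)]
    simp [AdjoinRoot.mk_self]
  have h2 : f %ₘ wPoly a b = C c1 * X + C c0 := by
    apply eq_X_add_C_of_degree_le_one
    have := degree_modByMonic_lt f (wPoly_monic a b)
    rw [wPoly_degree] at this
    exact Order.le_of_lt_succ (by exact_mod_cast this)
  rw [h1, h2]
  simp only [map_add, map_mul, AdjoinRoot.mk_C, AdjoinRoot.mk_X, ww]
  ring

lemma monic_dvd_small (a b : Z4) {q : Z4[X]} (h : wPoly a b ∣ q) (hq : q.degree < 2) : q = 0 := by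
  obtain ⟨c, rfl⟩ := h
  by_contra hc
  have hc' : c ≠ 0 := fun h0 => hc (by simp [h0])
  rw [mul_comm, (wPoly_monic a b).degree_mul] at hq
  rw [wPoly_degree] at hq
  have h0 : (0:WithBot ℕ) ≤ c.degree := zero_le_degree_iff.mpr hc'
  exact absurd hq (not_lt.mpr (le_add_of_nonneg_left h0))

lemma repr_inj (a b : Z4) {c0 c1 d0 d1 : Z4}
    (h : AdjoinRoot.of (wPoly a b) c0 + AdjoinRoot.of (wPoly a b) c1 * ww a b
       = AdjoinRoot.of (wPoly a b) d0 + AdjoinRoot.of (wPoly a b) d1 * ww a b) :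
    c0 = d0 ∧ c1 = d1 := by
  simp only [ww] at h
  have h2 : AdjoinRoot.mk (wPoly a b) (C (c0 - d0) + C (c1 - d1) * X) = 0 := by
    simp only [map_add, map_sub, map_mul, AdjoinRoot.mk_C, AdjoinRoot.mk_X, C_sub]
    linear_combination h
  rw [AdjoinRoot.mk_eq_zero] at h2
  have h3 : C (c0 - d0) + C (c1 - d1) * X = 0 := by
    apply monic_dvd_small a b h2
    have hle : (C (c0 - d0) + C (c1 - d1) * X).degree ≤ 1 := by
      rw [add_comm]; exact degree_linear_le
    exact lt_of_le_of_lt hle (by decide)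
  constructor
  · have := congrArg (fun p => coeff p 0) h3
    simpa [sub_eq_zero] using this
  · have := congrArg (fun p => coeff p 1) h3
    simpa [sub_eq_zero] using this

lemma root_sq (a b : Z4) :
    ww a b ^ 2 = AdjoinRoot.of (wPoly a b) a + AdjoinRoot.of (wPoly a b) b * ww a b := by
  have h : AdjoinRoot.mk (wPoly a b) (X ^ 2 - (C b * X + C a)) = 0 := AdjoinRoot.mk_self
  simp only [map_sub, map_add, map_mul, map_pow, AdjoinRoot.mk_C, AdjoinRoot.mk_X] at h
  simp only [ww]
  linear_combination h

lemma master (b : Z4) (hb : b = 0 ∨ b = 2) :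
    Ideal.span {(2 : Rw 2 b)} = Ideal.span {2 + 2 * ww 2 b} ∧
    Ideal.span {ww 2 b} = Ideal.span {3 * ww 2 b} ∧
    Ideal.span {ww 2 b} = Ideal.span {2 + ww 2 b} ∧
    Ideal.span {ww 2 b} = Ideal.span {2 + 3 * ww 2 b} ∧
    (∀ I : Ideal (Rw 2 b),
      I = ⊥ ∨ I = Ideal.span {2 * ww 2 b} ∨ I = Ideal.span {(2 : Rw 2 b)} ∨
      I = Ideal.span {ww 2 b} ∨ I = ⊤) ∧
    (⊥ : Ideal (Rw 2 b)) < Ideal.span {2 * ww 2 b} ∧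
    Ideal.span {2 * ww 2 b} < Ideal.span {(2 : Rw 2 b)} ∧
    Ideal.span {(2 : Rw 2 b)} < Ideal.span {ww 2 b} ∧
    Ideal.span {ww 2 b} < (⊤ : Ideal (Rw 2 b)) := by
  set φ := AdjoinRoot.of (wPoly 2 b) with hφdef
  set w := ww 2 b with hwdef
  have hφ2 : φ 2 = 2 := map_ofNat φ 2
  have h4 : (4 : Rw 2 b) = 0 := by
    rw [← map_ofNat φ 4, show (4:Z4) = 0 from by decide, map_zero]
  have hw2 : w ^ 2 = 2 + φ b * w := by
    have h := root_sq 2 b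
    rw [← hwdef, ← hφdef, hφ2] at h
    exact h
  have hB2 : 2 * φ b = 0 := by
    rw [← hφ2, ← map_mul, show (2:Z4) * b = 0 from by rcases hb with h|h <;> subst h <;> decide,
      map_zero]
  have hBB : φ b * φ b = 0 := by
    rw [← map_mul, show b * b = 0 from by rcases hb with h|h <;> subst h <;> decide, map_zero]
  have hw4 : w ^ 4 = 0 := by
    linear_combination (w^2 + 2 + φ b * w) * hw2 + h4 + 2*w*hB2 + w^2*hBB
  -- units
  have unit_of_odd : ∀ c0 c1 : Z4, (c0 = 1 ∨ c0 = 3) → IsUnit (φ c0 + φ c1 * w) := by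
    intro c0 c1 hc
    have hu : IsUnit (φ c0) :=
      (IsUnit.of_mul_eq_one (a := c0) c0 (by rcases hc with h|h <;> subst h <;> decide)).map φ
    have hn : IsNilpotent (φ c1 * w) := ⟨4, by rw [mul_pow, hw4, mul_zero]⟩
    have h := hn.isUnit_add_left_of_commute hu (Commute.all _ _)
    exact h
  -- membership helpers
  have mem_w_of_even : ∀ s c1 : Z4, φ (2*s) + φ c1 * w ∈ Ideal.span {w} := by
    intro s c1
    refine Ideal.mem_span_singleton'.mpr ⟨φ (c1 - b*s) + φ s * w, ?_⟩
    simp only [map_sub, map_mul, hφ2]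
    linear_combination (φ s) * hw2
  have w_eq_mul : ∀ s c1 : Z4, φ (2*s) + φ c1 * w = w * (φ (c1 - b*s) + φ s * w) := by
    intro s c1
    simp only [map_sub, map_mul, hφ2]
    linear_combination (-(φ s)) * hw2
  have hodd_sub : ∀ c1 s : Z4, (c1 = 1 ∨ c1 = 3) → (c1 - b*s = 1 ∨ c1 - b*s = 3) := by
    rcases hb with h|h <;> subst h <;> decide
  have mem_2_of_even : ∀ s t : Z4, φ (2*s) + φ (2*t) * w ∈ Ideal.span {(2 : Rw 2 b)} := by
    intro s t
    refine Ideal.mem_span_singleton'.mpr ⟨φ s + φ t * w, ?_⟩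
    simp only [map_mul, hφ2]
    ring
  have two_eq : 2 = (2 + 2*w) * (3 + w) := by
    linear_combination (-2 : Rw 2 b) * hw2 + (-2 - 2*w) * h4 + (-w) * hB2
  have mem_2w_of : ∀ t : Z4, φ (2*t) * w ∈ Ideal.span {2*w} := by
    intro t
    refine Ideal.mem_span_singleton'.mpr ⟨φ t, ?_⟩
    simp only [map_mul, hφ2]
    ring
  -- span equalities
  have heq1 : Ideal.span {(2 : Rw 2 b)} = Ideal.span {2 + 2 * w} := by
    apply le_antisymm <;> rw [Ideal.span_singleton_le_span_singleton]
    · exact ⟨3 + w, two_eq⟩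
    · exact ⟨1 + w, by ring⟩
  have heq2 : Ideal.span {w} = Ideal.span {3 * w} := by
    apply le_antisymm <;> rw [Ideal.span_singleton_le_span_singleton]
    · exact ⟨3, by linear_combination (-2)*w*h4⟩
    · exact ⟨3, by ring⟩
  have heq3 : Ideal.span {w} = Ideal.span {2 + w} := by
    apply le_antisymm <;> rw [Ideal.span_singleton_le_span_singleton]
    · exact ⟨(3 + w) * (1 - φ b), by
        linear_combination (-1 + φ b) * hw2 + (-w - 2) * h4 + (4 + 2*w) * hB2 + w * hBB⟩
    · exact ⟨w - φ b + 1, by linear_combination (-1 : Rw 2 b) * hw2⟩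
  have heq4 : Ideal.span {w} = Ideal.span {2 + 3 * w} := by
    apply le_antisymm <;> rw [Ideal.span_singleton_le_span_singleton]
    · exact ⟨(1 + 3*w) * (1 - φ b), by
        linear_combination (-9 + 9 * φ b) * hw2 + (-2*w - 5) * h4 + 10 * hB2 + 9*w*hBB⟩
    · exact ⟨w - φ b + 3, by linear_combination (-1 : Rw 2 b) * hw2⟩
  -- decide facts
  have heven : ∀ c : Z4, ¬c = 1 → ¬c = 3 → ∃ s, c = 2*s := by decide
  have hzero : ∀ c : Z4, ¬c = 1 → ¬c = 3 → ¬c = 2 → c = 0 := by decide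
  -- classification
  have hclass : ∀ I : Ideal (Rw 2 b),
      I = ⊥ ∨ I = Ideal.span {2 * w} ∨ I = Ideal.span {(2 : Rw 2 b)} ∨
      I = Ideal.span {w} ∨ I = ⊤ := by
    intro I
    by_cases hT : ∃ z ∈ I, ∃ c0 c1 : Z4, z = φ c0 + φ c1 * w ∧ (c0 = 1 ∨ c0 = 3)
    · obtain ⟨z, hz, c0, c1, rfl, hodd⟩ := hT
      exact Or.inr (Or.inr (Or.inr (Or.inr (I.eq_top_of_isUnit_mem hz (unit_of_odd c0 c1 hodd)))))
    push_neg at hT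
    by_cases hW : ∃ z ∈ I, ∃ c0 c1 : Z4, z = φ c0 + φ c1 * w ∧ (c1 = 1 ∨ c1 = 3)
    · refine Or.inr (Or.inr (Or.inr (Or.inl (le_antisymm ?_ ?_))))
      · intro x hx
        obtain ⟨c0, c1, rfl⟩ := exists_repr 2 b x
        obtain ⟨s, rfl⟩ := heven c0 (hT _ hx c0 c1 rfl).1 (hT _ hx c0 c1 rfl).2
        exact mem_w_of_even s c1
      · rw [Ideal.span_singleton_le_iff_mem]
        obtain ⟨z, hz, c0, c1, rfl, hodd⟩ := hW
        obtain ⟨s, rfl⟩ := heven c0 (hT _ hz c0 c1 rfl).1 (hT _ hz c0 c1 rfl).2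
        obtain ⟨u, hu⟩ := (unit_of_odd _ (s) (hodd_sub c1 s hodd)).exists_right_inv
        have hmem := I.mul_mem_right u hz
        rwa [w_eq_mul s c1, mul_assoc, hu, mul_one] at hmem
    push_neg at hW
    by_cases h2 : ∃ z ∈ I, ∃ c0 c1 : Z4, z = φ c0 + φ c1 * w ∧ c0 = 2
    · refine Or.inr (Or.inr (Or.inl (le_antisymm ?_ ?_)))
      · intro x hx
        obtain ⟨c0, c1, rfl⟩ := exists_repr 2 b x
        obtain ⟨s, rfl⟩ := heven c0 (hT _ hx c0 c1 rfl).1 (hT _ hx c0 c1 rfl).2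
        obtain ⟨t, rfl⟩ := heven c1 (hW _ hx _ c1 rfl).1 (hW _ hx _ c1 rfl).2
        exact mem_2_of_even s t
      · rw [Ideal.span_singleton_le_iff_mem]
        obtain ⟨z, hz, c0, c1, rfl, rfl⟩ := h2
        obtain ⟨t, rfl⟩ := heven c1 (hW _ hz _ c1 rfl).1 (hW _ hz _ c1 rfl).2
        rcases (show ∀ u : Z4, 2*u = 0 ∨ 2*u = 2 from by decide) t with h|h
        · rw [h] at hz
          simpa [hφ2] using hz
        · rw [h] at hz
          have h2mem := I.mul_mem_right (3 + w) hz
          rw [hφ2] at h2mem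
          rwa [← two_eq] at h2mem
    push_neg at h2
    by_cases h2w : 2 * w ∈ I
    · refine Or.inr (Or.inl (le_antisymm ?_ ?_))
      · intro x hx
        obtain ⟨c0, c1, rfl⟩ := exists_repr 2 b x
        have hc0 : c0 = 0 := hzero c0 (hT _ hx c0 c1 rfl).1 (hT _ hx c0 c1 rfl).2 (h2 _ hx c0 c1 rfl)
        obtain ⟨t, rfl⟩ := heven c1 (hW _ hx _ c1 rfl).1 (hW _ hx _ c1 rfl).2
        rw [hc0, map_zero, zero_add]
        exact mem_2w_of t
      · rwa [Ideal.span_singleton_le_iff_mem]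
    · refine Or.inl ((eq_bot_iff).mpr ?_)
      intro x hx
      obtain ⟨c0, c1, rfl⟩ := exists_repr 2 b x
      have hc0 : c0 = 0 := hzero c0 (hT _ hx c0 c1 rfl).1 (hT _ hx c0 c1 rfl).2 (h2 _ hx c0 c1 rfl)
      have hc1 : c1 = 0 := by
        apply hzero c1 (hW _ hx c0 c1 rfl).1 (hW _ hx c0 c1 rfl).2
        intro h
        apply h2w
        rw [hc0, h] at hx
        rw [← hφ2]; simp only [map_zero, zero_add] at hx; exact hx
      rw [hc0, hc1]
      simp
  -- strict chain
  have h2w_ne_zero : (2 : Rw 2 b) * w ≠ 0 := by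
    intro h
    have key : φ 0 + φ 2 * w = φ 0 + φ 0 * w := by
      simp only [map_zero, hφ2, zero_add, zero_mul]
      exact h ▸ rfl
    exact absurd (repr_inj 2 b key).2 (by decide)
  have hc1 : (⊥ : Ideal (Rw 2 b)) < Ideal.span {2 * w} := by
    refine bot_lt_iff_ne_bot.mpr ?_
    rw [Ne, Ideal.span_singleton_eq_bot]
    exact h2w_ne_zero
  have two_not_mem : (2 : Rw 2 b) ∉ Ideal.span {2 * w} := by
    intro hmem
    obtain ⟨z, hz⟩ := Ideal.mem_span_singleton'.mp hmem
    obtain ⟨c0, c1, rfl⟩ := exists_repr 2 b z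
    have key : φ 2 + φ 0 * w = φ 0 + φ (2*c0) * w := by
      simp only [map_zero, map_mul, hφ2, zero_add, zero_mul, add_zero]
      linear_combination -hz + 2 * φ c1 * hw2 + φ c1 * h4 + φ c1 * w * hB2
    exact absurd (repr_inj 2 b key).1 (by decide)
  have hc2 : Ideal.span {2 * w} < Ideal.span {(2 : Rw 2 b)} := by
    refine lt_of_le_of_ne ?_ ?_
    · rw [Ideal.span_singleton_le_span_singleton]
      exact ⟨w, rfl⟩
    · intro h
      exact two_not_mem (h ▸ Ideal.mem_span_singleton_self (2 : Rw 2 b))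
  have w_not_mem : w ∉ Ideal.span {(2 : Rw 2 b)} := by
    intro hmem
    obtain ⟨z, hz⟩ := Ideal.mem_span_singleton'.mp hmem
    obtain ⟨c0, c1, rfl⟩ := exists_repr 2 b z
    have key : φ 0 + φ 1 * w = φ (2*c0) + φ (2*c1) * w := by
      simp only [map_zero, map_one, map_mul, hφ2, zero_add, one_mul]
      linear_combination -hz
    exact (show ∀ c : Z4, ¬(1 = 2*c) from by decide) c1 (repr_inj 2 b key).2
  have hc3 : Ideal.span {(2 : Rw 2 b)} < Ideal.span {w} := by
    refine lt_of_le_of_ne ?_ ?_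
    · rw [Ideal.span_singleton_le_span_singleton]
      exact ⟨w - φ b, by linear_combination (-1 : Rw 2 b) * hw2⟩
    · intro h
      exact w_not_mem (h ▸ Ideal.mem_span_singleton_self w)
  have hc4 : Ideal.span {w} < ⊤ := by
    refine lt_top_iff_ne_top.mpr ?_
    intro h
    have hmem : (1 : Rw 2 b) ∈ Ideal.span {w} := h ▸ Submodule.mem_top
    obtain ⟨z, hz⟩ := Ideal.mem_span_singleton'.mp hmem
    obtain ⟨c0, c1, rfl⟩ := exists_repr 2 b z
    have key : φ 1 + φ 0 * w = φ (2*c1) + φ (c0 + b * c1) * w := by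
      simp only [map_zero, map_one, map_mul, map_add, hφ2, zero_mul, add_zero]
      linear_combination -hz + φ c1 * hw2
    exact (show ∀ c : Z4, ¬(1 = 2*c) from by decide) c1 (repr_inj 2 b key).1
  exact ⟨heq1, heq2, heq3, heq4, hclass, hc1, hc2, hc3, hc4⟩


/-- for θ = a + bw ∈ {2, 2+2w}, in R_θ one has (2) = (2+2w) and
(w) = (3w) = (2+w) = (2+3w), and R_θ has exactly five ideals, forming the chain
(0) ⊊ (2w) ⊊ (2) ⊊ (w) ⊊ R_θ. -/
theorem ideals_of_Rw_theta_two_case (a b : Z4) (hab : (a = 2 ∧ b = 0) ∨ (a = 2 ∧ b = 2)) :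
    Ideal.span {(2 : Rw a b)} = Ideal.span {2 + 2 * ww a b} ∧
    Ideal.span {ww a b} = Ideal.span {3 * ww a b} ∧
    Ideal.span {ww a b} = Ideal.span {2 + ww a b} ∧
    Ideal.span {ww a b} = Ideal.span {2 + 3 * ww a b} ∧
    (∀ I : Ideal (Rw a b),
      I = ⊥ ∨ I = Ideal.span {2 * ww a b} ∨ I = Ideal.span {(2 : Rw a b)} ∨
      I = Ideal.span {ww a b} ∨ I = ⊤) ∧
    (⊥ : Ideal (Rw a b)) < Ideal.span {2 * ww a b} ∧
    Ideal.span {2 * ww a b} < Ideal.span {(2 : Rw a b)} ∧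
    Ideal.span {(2 : Rw a b)} < Ideal.span {ww a b} ∧
    Ideal.span {ww a b} < (⊤ : Ideal (Rw a b)) := by
  obtain ⟨ha, hb⟩ | ⟨ha, hb⟩ := hab
  · subst ha; exact master b (Or.inl hb)
  · subst ha; exact master b (Or.inr hb)
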